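/- The average BER P̄_e(ρ, N) = ∫_0^∞ α e^{-ηρ x} d(1-e^{-x})^N, viewed as a function of N > 0, is convex and decreasing; hence for any ℕ-valued random variable 𝒩 with mean λ, E[P̄_e(ρ, 𝒩)] ≥ P̄_e(ρ, λ). -/

import Mathlib

open MeasureTheory

/-- The average BER `P̄_e(ρ,N) = ∫_0^∞ α e^{-ηρx} d(1-e^{-x})^N`, written
after integration by parts as `∫_0^∞ αηρ e^{-ηρx}(1-e^{-x})^N dx`. -/
noncomputable def avgBER (α η ρ N : ℝ) : ℝ :=
  ∫ x in Set.Ioi (0 : ℝ), α * η * ρ * Real.exp (-η * ρ * x) * (1 - Real.exp (-x)) ^ N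

namespace AvgBERAux

variable {α η ρ : ℝ}

lemma base_pos {x : ℝ} (hx : 0 < x) : 0 < 1 - Real.exp (-x) := by
  have : Real.exp (-x) < 1 := Real.exp_lt_one_iff.mpr (by linarith)
  linarith

lemma base_lt_one {x : ℝ} : 1 - Real.exp (-x) < 1 := by
  have := Real.exp_pos (-x); linarith

lemma contOn (α η ρ N : ℝ) :
    ContinuousOn (fun x : ℝ =>
      α * η * ρ * Real.exp (-η * ρ * x) * (1 - Real.exp (-x)) ^ N) (Set.Ioi 0) := by
  apply ContinuousOn.mul
  · exact (continuousOn_const.mul ((continuousOn_const.mul continuousOn_id).rexp))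
  · refine ContinuousOn.rpow_const (continuousOn_const.sub ?_) ?_
    · exact (continuousOn_id.neg.rexp)
    · intro x hx
      exact Or.inl (ne_of_gt (base_pos hx))

lemma aesm (α η ρ N : ℝ) :
    AEStronglyMeasurable (fun x : ℝ =>
      α * η * ρ * Real.exp (-η * ρ * x) * (1 - Real.exp (-x)) ^ N)
      (volume.restrict (Set.Ioi 0)) :=
  (contOn α η ρ N).aestronglyMeasurable measurableSet_Ioi

lemma integrand_nonneg (hα : 0 < α) (hη : 0 < η) (hρ : 0 < ρ) (N : ℝ) {x : ℝ}
    (hx : 0 < x) :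
    0 ≤ α * η * ρ * Real.exp (-η * ρ * x) * (1 - Real.exp (-x)) ^ N := by
  have := base_pos hx
  positivity

lemma integrable_bound (hη : 0 < η) (hρ : 0 < ρ) (α : ℝ) :
    IntegrableOn (fun x : ℝ => α * η * ρ * Real.exp (-η * ρ * x)) (Set.Ioi 0) := by
  have h := (exp_neg_integrableOn_Ioi 0 (mul_pos hη hρ)).const_mul (α * η * ρ)
  have he : (fun x : ℝ => α * η * ρ * Real.exp (-η * ρ * x))
      = fun x : ℝ => α * η * ρ * Real.exp (-(η * ρ) * x) := by
    funext x; ring_nf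
  rw [he]; exact h

lemma integrand_le_bound (hα : 0 < α) (hη : 0 < η) (hρ : 0 < ρ) {N : ℝ} (hN : 0 ≤ N)
    {x : ℝ} (hx : 0 < x) :
    α * η * ρ * Real.exp (-η * ρ * x) * (1 - Real.exp (-x)) ^ N
      ≤ α * η * ρ * Real.exp (-η * ρ * x) := by
  have h1 : (1 - Real.exp (-x)) ^ N ≤ 1 :=
    Real.rpow_le_one (base_pos hx).le base_lt_one.le hN
  calc α * η * ρ * Real.exp (-η * ρ * x) * (1 - Real.exp (-x)) ^ N
      ≤ α * η * ρ * Real.exp (-η * ρ * x) * 1 := by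
        apply mul_le_mul_of_nonneg_left h1; positivity
    _ = α * η * ρ * Real.exp (-η * ρ * x) := mul_one _

lemma integrable_integrand (hα : 0 < α) (hη : 0 < η) (hρ : 0 < ρ) {N : ℝ} (hN : 0 ≤ N) :
    IntegrableOn
      (fun x : ℝ => α * η * ρ * Real.exp (-η * ρ * x) * (1 - Real.exp (-x)) ^ N)
      (Set.Ioi 0) := by
  refine (integrable_bound hη hρ α).mono' (aesm α η ρ N) ?_
  filter_upwards [ae_restrict_mem measurableSet_Ioi] with x hx
  rw [Real.norm_of_nonneg (integrand_nonneg hα hη hρ N hx)]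
  exact integrand_le_bound hα hη hρ hN hx

end AvgBERAux

/-- `P̄_e(ρ,·)` is decreasing and convex on `(0,∞)`; hence by Jensen's
inequality, for any ℕ-valued random number of users `𝒩` (pmf `a`) with mean
`λ`, `E[P̄_e(ρ,𝒩)] ≥ P̄_e(ρ,λ)`. -/
theorem avg_ber_convex_jensen (α η ρ : ℝ) (hα : 0 < α) (hη : 0 < η) (hρ : 0 < ρ) :
    AntitoneOn (avgBER α η ρ) (Set.Ioi 0) ∧
    ConvexOn ℝ (Set.Ioi 0) (avgBER α η ρ) ∧
    ∀ (a : ℕ → ℝ) (lam : ℝ), (∀ k, 0 ≤ a k) → HasSum a 1 →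
      HasSum (fun k : ℕ => (k : ℝ) * a k) lam →
      avgBER α η ρ lam ≤ ∑' k : ℕ, a k * avgBER α η ρ k := by
  refine ⟨?_, ?_, ?_⟩
  · -- Antitone
    intro M hM N hN hMN
    have hM0 : (0:ℝ) < M := hM
    have hN0 : (0:ℝ) < N := hN
    unfold avgBER
    refine setIntegral_mono_on (AvgBERAux.integrable_integrand hα hη hρ hN0.le)
      (AvgBERAux.integrable_integrand hα hη hρ hM0.le) measurableSet_Ioi ?_
    intro x hx
    have hx0 : (0:ℝ) < x := hx
    have h := Real.rpow_le_rpow_of_exponent_ge (AvgBERAux.base_pos hx0)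
      (AvgBERAux.base_lt_one (x := x)).le hMN
    exact mul_le_mul_of_nonneg_left h (by positivity)
  · -- Convex
    refine ⟨convex_Ioi 0, ?_⟩
    intro M hM N hN p q hp hq hpq
    have hM0 : (0:ℝ) < M := hM
    have hN0 : (0:ℝ) < N := hN
    simp only [smul_eq_mul]
    have hMN0 : 0 ≤ p * M + q * N := by positivity
    have IM := AvgBERAux.integrable_integrand (α := α) hα hη hρ hM0.le
    have IN := AvgBERAux.integrable_integrand (α := α) hα hη hρ hN0.le
    have I1 := AvgBERAux.integrable_integrand (α := α) hα hη hρ hMN0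
    have key : ∀ x ∈ Set.Ioi (0:ℝ),
        α * η * ρ * Real.exp (-η * ρ * x) * (1 - Real.exp (-x)) ^ (p * M + q * N)
          ≤ p * (α * η * ρ * Real.exp (-η * ρ * x) * (1 - Real.exp (-x)) ^ M)
            + q * (α * η * ρ * Real.exp (-η * ρ * x) * (1 - Real.exp (-x)) ^ N) := by
      intro x hx
      have hx0 : (0:ℝ) < x := hx
      have ht0 : 0 < 1 - Real.exp (-x) := AvgBERAux.base_pos hx0
      set t := 1 - Real.exp (-x) with htdef
      set L := Real.log t with hLdef
      have e1 : t ^ (p * M + q * N) = Real.exp (L * (p * M + q * N)) :=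
        Real.rpow_def_of_pos ht0 _
      have e2 : t ^ M = Real.exp (L * M) := Real.rpow_def_of_pos ht0 _
      have e3 : t ^ N = Real.exp (L * N) := Real.rpow_def_of_pos ht0 _
      have hc := convexOn_exp.2 (Set.mem_univ (L * M)) (Set.mem_univ (L * N)) hp hq hpq
      simp only [smul_eq_mul] at hc
      have harg : L * (p * M + q * N) = p * (L * M) + q * (L * N) := by ring
      have hkey : t ^ (p * M + q * N) ≤ p * t ^ M + q * t ^ N := by
        rw [e1, e2, e3, harg]; exact hc
      have hpre : 0 ≤ α * η * ρ * Real.exp (-η * ρ * x) := by positivity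
      calc α * η * ρ * Real.exp (-η * ρ * x) * t ^ (p * M + q * N)
          ≤ α * η * ρ * Real.exp (-η * ρ * x) * (p * t ^ M + q * t ^ N) :=
            mul_le_mul_of_nonneg_left hkey hpre
        _ = p * (α * η * ρ * Real.exp (-η * ρ * x) * t ^ M)
            + q * (α * η * ρ * Real.exp (-η * ρ * x) * t ^ N) := by ring
    calc avgBER α η ρ (p * M + q * N)
        ≤ ∫ x in Set.Ioi (0:ℝ),
            (p * (α * η * ρ * Real.exp (-η * ρ * x) * (1 - Real.exp (-x)) ^ M)
              + q * (α * η * ρ * Real.exp (-η * ρ * x) * (1 - Real.exp (-x)) ^ N)) :=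
          setIntegral_mono_on I1 ((IM.const_mul p).add (IN.const_mul q))
            measurableSet_Ioi key
      _ = p * avgBER α η ρ M + q * avgBER α η ρ N := by
          rw [integral_add (IM.const_mul p) (IN.const_mul q),
            integral_const_mul, integral_const_mul]
          rfl
  · -- Jensen
    intro a lam ha hsum1 hsumlam
    have hlam0 : 0 ≤ lam := by
      rw [← hsumlam.tsum_eq]
      exact tsum_nonneg fun k => mul_nonneg (Nat.cast_nonneg k) (ha k)
    set F : ℕ → ℝ → ℝ := fun k x =>
      a k * (α * η * ρ * Real.exp (-η * ρ * x) * (1 - Real.exp (-x)) ^ (k:ℝ)) with hFdef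
    have hFnonneg : ∀ k : ℕ, ∀ x ∈ Set.Ioi (0:ℝ), 0 ≤ F k x := fun k x hx =>
      mul_nonneg (ha k) (AvgBERAux.integrand_nonneg hα hη hρ _ hx)
    have hFle : ∀ k : ℕ, ∀ x ∈ Set.Ioi (0:ℝ),
        F k x ≤ a k * (α * η * ρ * Real.exp (-η * ρ * x)) := fun k x hx =>
      mul_le_mul_of_nonneg_left
        (AvgBERAux.integrand_le_bound hα hη hρ (Nat.cast_nonneg k) hx) (ha k)
    have hFsummable : ∀ x ∈ Set.Ioi (0:ℝ), Summable fun k => F k x := by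
      intro x hx
      exact Summable.of_nonneg_of_le (fun k => hFnonneg k x hx) (fun k => hFle k x hx)
        (hsum1.summable.mul_right _)
    have hStsum_le : ∀ x ∈ Set.Ioi (0:ℝ),
        (∑' k, F k x) ≤ α * η * ρ * Real.exp (-η * ρ * x) := by
      intro x hx
      have h1 : (∑' k, F k x) ≤ ∑' k, a k * (α * η * ρ * Real.exp (-η * ρ * x)) :=
        Summable.tsum_le_tsum (fun k => hFle k x hx) (hFsummable x hx) (hsum1.summable.mul_right _)
      have h2 := (hsum1.mul_right (α * η * ρ * Real.exp (-η * ρ * x))).tsum_eq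
      rw [h2, one_mul] at h1
      exact h1
    -- pointwise Jensen for the integrand
    have hkey : ∀ x ∈ Set.Ioi (0:ℝ),
        α * η * ρ * Real.exp (-η * ρ * x) * (1 - Real.exp (-x)) ^ lam ≤ ∑' k, F k x := by
      intro x hx
      have hx0 : (0:ℝ) < x := hx
      have ht0 : 0 < 1 - Real.exp (-x) := AvgBERAux.base_pos hx0
      have ht1 : 1 - Real.exp (-x) ≤ 1 := (AvgBERAux.base_lt_one (x := x)).le
      set t := 1 - Real.exp (-x) with htdef
      set L := Real.log t with hLdef
      set E := Real.exp (L * lam) with hEdef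
      have hexp : ∀ k : ℕ, E * (1 + (L * k - L * lam)) ≤ t ^ (k:ℝ) := by
        intro k
        have h1 : (L * k - L * lam) + 1 ≤ Real.exp (L * k - L * lam) :=
          Real.add_one_le_exp _
        have h2 : E * ((L * k - L * lam) + 1) ≤ E * Real.exp (L * k - L * lam) :=
          mul_le_mul_of_nonneg_left h1 (Real.exp_pos _).le
        have h3 : E * Real.exp (L * k - L * lam) = Real.exp (L * k) := by
          rw [hEdef, ← Real.exp_add]; ring_nf
        have h4 : t ^ (k:ℝ) = Real.exp (L * k) := Real.rpow_def_of_pos ht0 _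
        rw [h4, ← h3]
        calc E * (1 + (L * k - L * lam)) = E * ((L * k - L * lam) + 1) := by ring
          _ ≤ E * Real.exp (L * k - L * lam) := h2
      have hTsummable : Summable fun k : ℕ => a k * t ^ (k:ℝ) := by
        refine Summable.of_nonneg_of_le
          (fun k => mul_nonneg (ha k) (Real.rpow_nonneg ht0.le _))
          (fun k => ?_) hsum1.summable
        exact mul_le_of_le_one_right (ha k)
          (Real.rpow_le_one ht0.le ht1 (Nat.cast_nonneg k))
      have H : HasSum (fun k : ℕ => E * (1 - L * lam) * a k + E * L * ((k:ℝ) * a k))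
          (E * (1 - L * lam) * 1 + E * L * lam) :=
        (hsum1.mul_left _).add (hsumlam.mul_left _)
      have hfun : (fun k : ℕ => E * (1 - L * lam) * a k + E * L * ((k:ℝ) * a k))
          = fun k : ℕ => a k * (E * (1 + (L * k - L * lam))) := by
        funext k; ring
      have hE : E * (1 - L * lam) * 1 + E * L * lam = E := by ring
      rw [hfun, hE] at H
      have hET : E ≤ ∑' k, a k * t ^ (k:ℝ) := by
        rw [← H.tsum_eq]
        exact Summable.tsum_le_tsum
          (fun k => mul_le_mul_of_nonneg_left (hexp k) (ha k)) H.summable hTsummable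
      have hpt : t ^ lam = E := Real.rpow_def_of_pos ht0 lam
      have hpre : 0 ≤ α * η * ρ * Real.exp (-η * ρ * x) := by positivity
      calc α * η * ρ * Real.exp (-η * ρ * x) * t ^ lam
          ≤ α * η * ρ * Real.exp (-η * ρ * x) * ∑' k, a k * t ^ (k:ℝ) := by
            rw [hpt]; exact mul_le_mul_of_nonneg_left hET hpre
        _ = ∑' k, F k x := by
            rw [← tsum_mul_left]
            exact tsum_congr fun k => by simp only [hFdef]; ring
    -- integrability of the series
    have hSaesm : AEStronglyMeasurable (fun x => ∑' k, F k x)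
        (volume.restrict (Set.Ioi 0)) := by
      refine aestronglyMeasurable_of_tendsto_ae (u := Filter.atTop)
        (f := fun n x => ∑ k ∈ Finset.range n, F k x) ?_ ?_
      · intro n
        apply Finset.aestronglyMeasurable_fun_sum
        intro k _
        exact (AvgBERAux.aesm α η ρ (k:ℝ)).const_mul (a k)
      · filter_upwards [ae_restrict_mem measurableSet_Ioi] with x hx
        exact (hFsummable x hx).hasSum.tendsto_sum_nat
    have hSint : IntegrableOn (fun x => ∑' k, F k x) (Set.Ioi 0) := by
      refine (AvgBERAux.integrable_bound hη hρ α).mono' hSaesm ?_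
      filter_upwards [ae_restrict_mem measurableSet_Ioi] with x hx
      rw [Real.norm_of_nonneg (tsum_nonneg fun k => hFnonneg k x hx)]
      exact hStsum_le x hx
    have step1 : avgBER α η ρ lam ≤ ∫ x in Set.Ioi (0:ℝ), ∑' k, F k x :=
      setIntegral_mono_on (AvgBERAux.integrable_integrand hα hη hρ hlam0) hSint
        measurableSet_Ioi hkey
    have hFint : ∀ k : ℕ, Integrable (F k) (volume.restrict (Set.Ioi 0)) := fun k =>
      (AvgBERAux.integrable_integrand hα hη hρ (Nat.cast_nonneg k)).const_mul (a k)
    have hnorm : ∀ k : ℕ, (∫ x in Set.Ioi (0:ℝ), ‖F k x‖) = a k * avgBER α η ρ k := by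
      intro k
      rw [setIntegral_congr_fun measurableSet_Ioi
        (fun x hx => Real.norm_of_nonneg (hFnonneg k x hx))]
      exact integral_const_mul _ _
    have havgle : ∀ k : ℕ, avgBER α η ρ k
        ≤ ∫ x in Set.Ioi (0:ℝ), α * η * ρ * Real.exp (-η * ρ * x) := fun k =>
      setIntegral_mono_on (AvgBERAux.integrable_integrand hα hη hρ (Nat.cast_nonneg k))
        (AvgBERAux.integrable_bound hη hρ α) measurableSet_Ioi
        (fun x hx => AvgBERAux.integrand_le_bound hα hη hρ (Nat.cast_nonneg k) hx)
    have hsummable_norm : Summable fun k : ℕ => ∫ x in Set.Ioi (0:ℝ), ‖F k x‖ := by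
      have h1 : ∀ k : ℕ, 0 ≤ a k * avgBER α η ρ k := fun k =>
        mul_nonneg (ha k) (setIntegral_nonneg measurableSet_Ioi
          (fun x hx => AvgBERAux.integrand_nonneg hα hη hρ _ hx))
      have h2 : ∀ k : ℕ, a k * avgBER α η ρ k
          ≤ a k * ∫ x in Set.Ioi (0:ℝ), α * η * ρ * Real.exp (-η * ρ * x) := fun k =>
        mul_le_mul_of_nonneg_left (havgle k) (ha k)
      have h3 : Summable fun k : ℕ =>
          a k * ∫ x in Set.Ioi (0:ℝ), α * η * ρ * Real.exp (-η * ρ * x) :=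
        hsum1.summable.mul_right _
      exact (Summable.of_nonneg_of_le h1 h2 h3).congr fun k => (hnorm k).symm
    have hswap := integral_tsum_of_summable_integral_norm hFint hsummable_norm
    calc avgBER α η ρ lam ≤ ∫ x in Set.Ioi (0:ℝ), ∑' k, F k x := step1
      _ = ∑' k : ℕ, ∫ x in Set.Ioi (0:ℝ), F k x := hswap.symm
      _ = ∑' k : ℕ, a k * avgBER α η ρ k :=
          tsum_congr fun k => integral_const_mul _ _
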